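/- Let (X, μ) be a measure space with 0 < μ(X) < ∞, let (u_m)_{m∈ℕ} be measurable functions u_m : X → ℝ converging μ-almost everywhere to a measurable function u : X → ℝ, and assume that for every m one has μ{x : u_m(x) > 0} ≤ μ(X)/2 and μ{x : u_m(x) < 0} ≤ μ(X)/2. Then μ{x : u(x) > 0} ≤ μ(X)/2 and μ{x : u(x) < 0} ≤ μ(X)/2, i.e. 0 belongs to the median set med(u). -/

import Mathlib

open MeasureTheory Filter

lemma measure_liminf_le_of_le {X : Type*} [MeasurableSpace X] (μ : Measure X)
    (s : ℕ → Set X) (C : ENNReal) (h : ∀ n, μ (s n) ≤ C) :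
    μ (Filter.liminf s atTop) ≤ C := by
  rw [Filter.liminf_eq_iSup_iInf_of_nat]
  have hdir : Monotone (fun n => ⋂ m, ⋂ (_ : n ≤ m), s m) := by
    intro a b hab
    exact Set.iInter₂_mono' fun m hm => ⟨m, hab.trans hm, le_rfl⟩
  calc μ (⋃ n, ⋂ m, ⋂ (_ : n ≤ m), s m)
      = ⨆ n, μ (⋂ m, ⋂ (_ : n ≤ m), s m) :=
        hdir.directed_le.measure_iUnion
    _ ≤ C := iSup_le fun n => le_trans (measure_mono (Set.iInter₂_subset n le_rfl)) (h n)

theorem zero_mem_median_of_ae_tendsto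
    {X : Type*} [MeasurableSpace X] (μ : Measure X)
    (hpos : 0 < μ Set.univ) (hfin : μ Set.univ < ⊤)
    (u : ℕ → X → ℝ) (hu : ∀ m, Measurable (u m))
    (v : X → ℝ) (hv : Measurable v)
    (hconv : ∀ᵐ x ∂μ, Tendsto (fun m => u m x) atTop (nhds (v x)))
    (hmed : ∀ m, μ {x | u m x > 0} ≤ μ Set.univ / 2 ∧ μ {x | u m x < 0} ≤ μ Set.univ / 2) :
    μ {x | v x > 0} ≤ μ Set.univ / 2 ∧ μ {x | v x < 0} ≤ μ Set.univ / 2 := by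
  constructor
  · have hsub : {x | v x > 0} ≤ᵐ[μ] (Filter.liminf (fun m => {x | u m x > 0}) atTop : Set X) := by
      filter_upwards [hconv] with x hx hxv
      exact Filter.mem_liminf_iff_eventually_mem.mpr (hx.eventually (eventually_gt_nhds hxv))
    exact le_trans (measure_mono_ae hsub)
      (measure_liminf_le_of_le μ _ _ fun m => (hmed m).1)
  · have hsub : {x | v x < 0} ≤ᵐ[μ] (Filter.liminf (fun m => {x | u m x < 0}) atTop : Set X) := by
      filter_upwards [hconv] with x hx hxv
      exact Filter.mem_liminf_iff_eventually_mem.mpr (hx.eventually (eventually_lt_nhds hxv))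
    exact le_trans (measure_mono_ae hsub)
      (measure_liminf_le_of_le μ _ _ fun m => (hmed m).2)
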